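/- Let ρ > 0 and τ ∈ (0, π/2), and define p(θ) = cos 2θ + 2ρ cos(θ − τ). Then: (a) for every θ ∈ [0, π/2], p(θ) > p(θ + π); (b) for every θ ∈ [π/2, π), p(θ) > p(2π − θ); (c) for every θ ∈ (3π/2, 2π], p(θ) > p(3π − θ). Consequently, every global minimum point of p on [0, 2π] lies in [π, 3π/2]. -/
import Mathlib


open Real

/-- symmetry inequalities for `p(θ) = cos 2θ + 2ρ cos(θ − τ)` with
`ρ > 0`, `τ ∈ (0, π/2)`, localizing any global minimum point on `[0, 2π]`
to the interval `[π, 3π/2]`. -/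
theorem min_point_localization (ρ τ : ℝ) (hρ : 0 < ρ) (hτ : τ ∈ Set.Ioo 0 (π / 2))
    (P : ℝ → ℝ) (hP : P = fun θ => Real.cos (2 * θ) + 2 * ρ * Real.cos (θ - τ)) :
    (∀ θ ∈ Set.Icc (0 : ℝ) (π / 2), P (θ + π) < P θ)
    ∧ (∀ θ ∈ Set.Ico (π / 2) π, P (2 * π - θ) < P θ)
    ∧ (∀ θ ∈ Set.Ioc (3 * π / 2) (2 * π), P (3 * π - θ) < P θ)
    ∧ (∀ θm ∈ Set.Icc (0 : ℝ) (2 * π),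
        (∀ θ ∈ Set.Icc (0 : ℝ) (2 * π), P θm ≤ P θ) →
          θm ∈ Set.Icc π (3 * π / 2)) := by
  obtain ⟨hτ0, hτπ⟩ := hτ
  have hπ := Real.pi_pos
  subst hP
  have ha : ∀ θ ∈ Set.Icc (0 : ℝ) (π / 2), (fun θ => Real.cos (2 * θ) + 2 * ρ * Real.cos (θ - τ)) (θ + π) < (fun θ => Real.cos (2 * θ) + 2 * ρ * Real.cos (θ - τ)) θ := by
    intro θ ⟨h0, h1⟩
    have hc : Real.cos (θ - τ) > 0 := by
      apply Real.cos_pos_of_mem_Ioo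
      constructor <;> linarith
    have e1 : Real.cos (2 * (θ + π)) = Real.cos (2 * θ) := by
      rw [show 2 * (θ + π) = 2 * θ + 2 * π by ring, Real.cos_add_two_pi]
    have e2 : Real.cos (θ + π - τ) = -Real.cos (θ - τ) := by
      rw [show θ + π - τ = (θ - τ) + π by ring, Real.cos_add_pi]
    simp only
    rw [e1, e2]
    nlinarith
  have hb : ∀ θ ∈ Set.Ico (π / 2) π, (fun θ => Real.cos (2 * θ) + 2 * ρ * Real.cos (θ - τ)) (2 * π - θ) < (fun θ => Real.cos (2 * θ) + 2 * ρ * Real.cos (θ - τ)) θ := by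
    intro θ ⟨h0, h1⟩
    have hs : Real.sin θ > 0 := Real.sin_pos_of_pos_of_lt_pi (by linarith) h1
    have hsτ : Real.sin τ > 0 := Real.sin_pos_of_pos_of_lt_pi hτ0 (by linarith)
    have e1 : Real.cos (2 * (2 * π - θ)) = Real.cos (2 * θ) := by
      rw [show 2 * (2 * π - θ) = (-(2 * θ) + 2 * π) + 2 * π by ring,
        Real.cos_add_two_pi, Real.cos_add_two_pi, Real.cos_neg]
    have e2 : Real.cos (2 * π - θ - τ) = Real.cos (θ + τ) := by
      rw [show 2 * π - θ - τ = -(θ + τ) + 2 * π by ring, Real.cos_add_two_pi, Real.cos_neg]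
    simp only
    rw [e1, e2, Real.cos_add, Real.cos_sub]
    nlinarith [mul_pos hs hsτ]
  have hc : ∀ θ ∈ Set.Ioc (3 * π / 2) (2 * π), (fun θ => Real.cos (2 * θ) + 2 * ρ * Real.cos (θ - τ)) (3 * π - θ) < (fun θ => Real.cos (2 * θ) + 2 * ρ * Real.cos (θ - τ)) θ := by
    intro θ ⟨h0, h1⟩
    have hcθ : Real.cos θ > 0 := by
      have : Real.cos (θ - 2 * π) > 0 := by
        apply Real.cos_pos_of_mem_Ioo
        constructor <;> linarith
      rwa [Real.cos_sub_two_pi] at this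
    have hcτ : Real.cos τ > 0 := by
      apply Real.cos_pos_of_mem_Ioo
      constructor <;> linarith
    have e1 : Real.cos (2 * (3 * π - θ)) = Real.cos (2 * θ) := by
      rw [show 2 * (3 * π - θ) = ((-(2 * θ) + 2 * π) + 2 * π) + 2 * π by ring,
        Real.cos_add_two_pi, Real.cos_add_two_pi, Real.cos_add_two_pi, Real.cos_neg]
    have e2 : Real.cos (3 * π - θ - τ) = -Real.cos (θ + τ) := by
      rw [show 3 * π - θ - τ = -(θ + τ) + π + 2 * π by ring, Real.cos_add_two_pi,
        Real.cos_add_pi, Real.cos_neg]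
    simp only
    rw [e1, e2, Real.cos_add, Real.cos_sub]
    nlinarith [mul_pos hcθ hcτ]
  refine ⟨ha, hb, hc, ?_⟩
  intro θm ⟨hm0, hm1⟩ hmin
  constructor
  · by_contra h
    push_neg at h
    by_cases hh : θm ≤ π / 2
    · have := ha θm ⟨hm0, hh⟩
      have := hmin (θm + π) ⟨by linarith, by linarith⟩
      linarith
    · push_neg at hh
      have := hb θm ⟨le_of_lt hh, h⟩
      have := hmin (2 * π - θm) ⟨by linarith, by linarith⟩
      linarith
  · by_contra h
    push_neg at h
    have := hc θm ⟨h, hm1⟩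
    have := hmin (3 * π - θm) ⟨by linarith, by linarith⟩
    linarith
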